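/- (Complex Dirichlet theorem) Given any complex number z and any positive integer N, there exist Gaussian integers p and q with 0 < |q| ≤ N such that |z − p/q| < 2/(|q|·N). Moreover, the inequality |z − p/q| < 2/|q|² holds for infinitely many pairs of Gaussian integers p, q with q ≠ 0. -/

import Mathlib

open Finset Complex

namespace Stmt14Aux

noncomputable def wz (z : ℂ) (q : ℤ × ℤ) : ℂ := ((q.1 : ℂ) + (q.2 : ℂ) * Complex.I) * z

lemma core (z : ℂ) (N K₁ K₂ : ℕ) (hN : 0 < N) (hK₁ : 0 < K₁) (hK₂ : 0 < K₂)
    (Q : Finset (ℤ × ℤ))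
    (hdiam : ∀ q₁ ∈ Q, ∀ q₂ ∈ Q, (q₁.1 - q₂.1)^2 + (q₁.2 - q₂.2)^2 ≤ (N:ℤ)^2)
    (hcard : K₁ * K₂ < Q.card)
    (hcell : N^2 * (K₁^2 + K₂^2) ≤ 4 * (K₁^2 * K₂^2)) :
    ∃ p q : GaussianInt, 0 < ‖(q : ℂ)‖ ∧ ‖(q : ℂ)‖ ≤ N ∧
      ‖(z - (p : ℂ) / (q : ℂ))‖ < 2 / (‖(q : ℂ)‖ * N) := by
  classical
  have hK₁R : (0:ℝ) < K₁ := by exact_mod_cast hK₁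
  have hK₂R : (0:ℝ) < K₂ := by exact_mod_cast hK₂
  have hNR : (0:ℝ) < N := by exact_mod_cast hN
  set f : ℤ × ℤ → ℤ × ℤ := fun q =>
    (⌊(K₁ : ℝ) * Int.fract (wz z q).re⌋, ⌊(K₂ : ℝ) * Int.fract (wz z q).im⌋) with hf
  have hmaps : ∀ q ∈ Q, f q ∈ Finset.Ico (0:ℤ) K₁ ×ˢ Finset.Ico (0:ℤ) K₂ := by
    intro q _
    simp only [hf, Finset.mem_product, Finset.mem_Ico]
    refine ⟨⟨Int.floor_nonneg.2 (mul_nonneg hK₁R.le (Int.fract_nonneg _)), ?_⟩,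
      ⟨Int.floor_nonneg.2 (mul_nonneg hK₂R.le (Int.fract_nonneg _)), ?_⟩⟩
    · rw [Int.floor_lt]
      push_cast
      exact mul_lt_of_lt_one_right hK₁R (Int.fract_lt_one _)
    · rw [Int.floor_lt]
      push_cast
      exact mul_lt_of_lt_one_right hK₂R (Int.fract_lt_one _)
  have hcardT : (Finset.Ico (0:ℤ) (K₁:ℤ) ×ˢ Finset.Ico (0:ℤ) (K₂:ℤ)).card = K₁ * K₂ := by
    rw [Finset.card_product, Int.card_Ico, Int.card_Ico]
    simp
  obtain ⟨q₁, hq₁, q₂, hq₂, hne, hfe⟩ :=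
    Finset.exists_ne_map_eq_of_card_lt_of_maps_to (by rw [hcardT]; exact hcard) hmaps
  have hfe1 : ⌊(K₁ : ℝ) * Int.fract (wz z q₁).re⌋ = ⌊(K₁ : ℝ) * Int.fract (wz z q₂).re⌋ := by
    have := congrArg Prod.fst hfe; simpa [hf] using this
  have hfe2 : ⌊(K₂ : ℝ) * Int.fract (wz z q₁).im⌋ = ⌊(K₂ : ℝ) * Int.fract (wz z q₂).im⌋ := by
    have := congrArg Prod.snd hfe; simpa [hf] using this
  set d₁ : ℝ := Int.fract (wz z q₁).re - Int.fract (wz z q₂).re with hd₁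
  set d₂ : ℝ := Int.fract (wz z q₁).im - Int.fract (wz z q₂).im with hd₂
  have hred : |d₁| < 1 / K₁ := by
    have h := Int.abs_sub_lt_one_of_floor_eq_floor hfe1
    rw [← mul_sub, _root_.abs_mul, _root_.abs_of_nonneg hK₁R.le] at h
    rw [lt_div_iff₀ hK₁R]
    linarith [h, mul_comm (K₁:ℝ) |d₁|]
  have himd : |d₂| < 1 / K₂ := by
    have h := Int.abs_sub_lt_one_of_floor_eq_floor hfe2
    rw [← mul_sub, _root_.abs_mul, _root_.abs_of_nonneg hK₂R.le] at h
    rw [lt_div_iff₀ hK₂R]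
    linarith [h, mul_comm (K₂:ℝ) |d₂|]
  set p : GaussianInt := ⟨⌊(wz z q₁).re⌋ - ⌊(wz z q₂).re⌋, ⌊(wz z q₁).im⌋ - ⌊(wz z q₂).im⌋⟩ with hp
  set q : GaussianInt := ⟨q₁.1 - q₂.1, q₁.2 - q₂.2⟩ with hq
  have hq0 : q ≠ 0 := by
    intro h
    apply hne
    have h1 : q₁.1 - q₂.1 = 0 := by
      have := congrArg Zsqrtd.re h; simpa [hq] using this
    have h2 : q₁.2 - q₂.2 = 0 := by
      have := congrArg Zsqrtd.im h; simpa [hq] using this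
    exact Prod.ext (by omega) (by omega)
  have hqc : (q : ℂ) ≠ 0 := by
    rw [Ne, GaussianInt.toComplex_eq_zero]; exact hq0
  have hqz : (q : ℂ) * z = wz z q₁ - wz z q₂ := by
    rw [hq, GaussianInt.toComplex_def']
    simp only [wz]
    push_cast
    ring
  have hre' : ((q:ℂ) * z - (p:ℂ)).re = d₁ := by
    rw [Complex.sub_re, hqz, hp, GaussianInt.toComplex_def', Complex.sub_re]
    rw [hd₁]
    simp [Complex.add_re, Complex.sub_re, Complex.mul_re, Complex.I_re, Complex.I_im]
    unfold Int.fract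
    ring
  have him' : ((q:ℂ) * z - (p:ℂ)).im = d₂ := by
    rw [Complex.sub_im, hqz, hp, GaussianInt.toComplex_def', Complex.sub_im]
    rw [hd₂]
    simp [Complex.add_im, Complex.sub_im, Complex.mul_im, Complex.I_re, Complex.I_im]
    unfold Int.fract
    ring
  have hcell' : (1/(K₁:ℝ))^2 + (1/(K₂:ℝ))^2 ≤ (2/(N:ℝ))^2 := by
    have hc : ((N:ℝ))^2 * ((K₁:ℝ)^2 + (K₂:ℝ)^2) ≤ 4 * ((K₁:ℝ)^2 * (K₂:ℝ)^2) := by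
      exact_mod_cast hcell
    rw [div_pow, div_pow, div_pow, div_add_div _ _ (by positivity) (by positivity),
      div_le_div_iff₀ (by positivity) (by positivity)]
    nlinarith [hc]
  have habs2 : (‖((q:ℂ)*z - (p:ℂ))‖)^2 < (2/(N:ℝ))^2 := by
    rw [Complex.sq_norm, Complex.normSq_apply, hre', him']
    have t1 : d₁^2 < (1/(K₁:ℝ))^2 := by
      rw [← _root_.sq_abs]
      nlinarith [abs_nonneg d₁, hred]
    have t2 : d₂^2 < (1/(K₂:ℝ))^2 := by
      rw [← _root_.sq_abs]
      nlinarith [abs_nonneg d₂, himd]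
    calc d₁*d₁ + d₂*d₂ = d₁^2 + d₂^2 := by ring
      _ < (1/(K₁:ℝ))^2 + (1/(K₂:ℝ))^2 := by linarith
      _ ≤ (2/(N:ℝ))^2 := hcell'
  have habs : ‖((q:ℂ)*z - (p:ℂ))‖ < 2/(N:ℝ) :=
    lt_of_pow_lt_pow_left₀ 2 (by positivity) habs2
  have hqre : ((q:ℂ)).re = ((q₁.1 - q₂.1 : ℤ) : ℝ) := by
    rw [hq]; exact (GaussianInt.intCast_re _).symm
  have hqim : ((q:ℂ)).im = ((q₁.2 - q₂.2 : ℤ) : ℝ) := by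
    rw [hq]; exact (GaussianInt.intCast_im _).symm
  have hqn : (‖(q:ℂ)‖)^2 ≤ (N:ℝ)^2 := by
    have hd := hdiam q₁ hq₁ q₂ hq₂
    have hdr : (((q₁.1 - q₂.1)^2 + (q₁.2 - q₂.2)^2 : ℤ) : ℝ) ≤ (((N:ℤ)^2 : ℤ) : ℝ) := by
      exact_mod_cast hd
    rw [Complex.sq_norm, Complex.normSq_apply, hqre, hqim]
    push_cast at hdr ⊢
    have e : ((q₁.1:ℝ) - q₂.1) * ((q₁.1:ℝ) - q₂.1) + ((q₁.2:ℝ) - q₂.2) * ((q₁.2:ℝ) - q₂.2)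
        = ((q₁.1:ℝ) - q₂.1)^2 + ((q₁.2:ℝ) - q₂.2)^2 := by ring
    rw [e]
    exact hdr
  have hqN : ‖(q:ℂ)‖ ≤ (N:ℝ) :=
    le_of_pow_le_pow_left₀ two_ne_zero (by positivity) hqn
  have hq0' : 0 < ‖(q:ℂ)‖ := norm_pos_iff.mpr hqc
  refine ⟨p, q, hq0', hqN, ?_⟩
  have heq : z - (p:ℂ)/(q:ℂ) = ((q:ℂ)*z - (p:ℂ))/(q:ℂ) := by
    field_simp
  rw [heq, norm_div]
  rw [div_lt_div_iff₀ hq0' (by positivity)]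
  have h2 : ‖((q:ℂ)*z - (p:ℂ))‖ * (N:ℝ) < 2 := by
    rw [← lt_div_iff₀ hNR]; exact habs
  have e : ‖((q:ℂ)*z - (p:ℂ))‖ * (‖(q:ℂ)‖ * (N:ℝ))
      = (‖((q:ℂ)*z - (p:ℂ))‖ * (N:ℝ)) * ‖(q:ℂ)‖ := by ring
  rw [e]
  exact mul_lt_mul_of_pos_right h2 hq0'

lemma cross (z : ℂ) (N m c K : ℕ) (hN : 0 < N) (hK : 0 < K) (hcm : c ≤ m)
    (hdiam : 4*(m^2+c^2) ≤ N^2) (hKN : N^2 ≤ 2*K^2)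
    (hcnt : K^2 < (2*c+1)*(4*m - 2*c + 1)) :
    ∃ p q : GaussianInt, 0 < ‖(q : ℂ)‖ ∧ ‖(q : ℂ)‖ ≤ N ∧
      ‖(z - (p : ℂ) / (q : ℂ))‖ < 2 / (‖(q : ℂ)‖ * N) := by
  set R₁ : Finset (ℤ × ℤ) := Finset.Icc (-(m:ℤ)) m ×ˢ Finset.Icc (-(c:ℤ)) c with hR₁
  set R₂ : Finset (ℤ × ℤ) := Finset.Icc (-(c:ℤ)) c ×ˢ Finset.Icc (-(m:ℤ)) m with hR₂
  have hmc : (c:ℤ) ≤ m := by exact_mod_cast hcm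
  apply core z N K K hN hK hK (R₁ ∪ R₂)
  · -- pairwise bound
    intro a ha b hb
    have hpt : ∀ x ∈ R₁ ∪ R₂, x.1^2 + x.2^2 ≤ (m:ℤ)^2 + (c:ℤ)^2 := by
      intro x hx
      rw [Finset.mem_union, hR₁, hR₂] at hx
      rcases hx with hx | hx <;>
        · rw [Finset.mem_product, Finset.mem_Icc, Finset.mem_Icc] at hx
          nlinarith [hx.1.1, hx.1.2, hx.2.1, hx.2.2]
    have h1 := hpt a ha
    have h2 := hpt b hb
    have hdi : 4*((m:ℤ)^2+(c:ℤ)^2) ≤ (N:ℤ)^2 := by exact_mod_cast hdiam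
    nlinarith [h1, h2, sq_nonneg (a.1 + b.1), sq_nonneg (a.2 + b.2)]
  · -- card
    have hiccm : (Finset.Icc (-(m:ℤ)) m).card = 2*m+1 := by
      rw [Int.card_Icc]; omega
    have hiccc : (Finset.Icc (-(c:ℤ)) c).card = 2*c+1 := by
      rw [Int.card_Icc]; omega
    have hint : R₁ ∩ R₂ = Finset.Icc (-(c:ℤ)) c ×ˢ Finset.Icc (-(c:ℤ)) c := by
      ext x
      simp only [hR₁, hR₂, Finset.mem_inter, Finset.mem_product, Finset.mem_Icc]
      omega
    have e1 : R₁.card = (2*m+1)*(2*c+1) := by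
      rw [hR₁, Finset.card_product, hiccm, hiccc]
    have e2 : R₂.card = (2*c+1)*(2*m+1) := by
      rw [hR₂, Finset.card_product, hiccm, hiccc]
    have e3 : (R₁ ∩ R₂).card = (2*c+1)*(2*c+1) := by
      rw [hint, Finset.card_product, hiccc]
    have hcu := Finset.card_union_add_card_inter R₁ R₂
    rw [e1, e2, e3] at hcu
    -- hcu : (R₁ ∪ R₂).card + (2c+1)*(2c+1) = (2m+1)*(2c+1) + (2c+1)*(2m+1)
    obtain ⟨w, hw⟩ : ∃ w, 4*m - 2*c + 1 = w := ⟨_, rfl⟩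
    rw [hw] at hcnt
    have key : (2*c+1)*w + (2*c+1)*(2*c+1) = (2*m+1)*(2*c+1) + (2*c+1)*(2*m+1) := by
      have h1 : (2*c+1)*(w + (2*c+1)) = (2*c+1)*w + (2*c+1)*(2*c+1) := by ring
      rw [← h1]
      have h4 : w + (2*c+1) = 2*(2*m+1) := by omega
      rw [h4]; ring
    have hfin : (2*c+1)*w = (R₁ ∪ R₂).card := by omega
    have hKK : K*K = K^2 := by ring
    rw [hKK, ← hfin]
    exact hcnt
  · -- cell
    nlinarith [hKN, sq_nonneg K, hK]


lemma params (N : ℕ) (h5 : 5 ≤ N) (h6 : N ≠ 6) (h7 : N ≠ 7) (h9 : N ≠ 9) :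
    N/4 ≤ 3*N/7 ∧ 4*((3*N/7)^2+(N/4)^2) ≤ N^2 ∧ N^2 ≤ 2*(5*N/7+1)^2 ∧
    (5*N/7+1)^2 < (2*(N/4)+1)*(4*(3*N/7) - 2*(N/4) + 1) := by
  rcases lt_or_ge N 40 with h | h
  · interval_cases N <;> revert h6 h7 h9 <;> decide
  · set m := 3*N/7 with hm
    set c := N/4 with hc
    set K := 5*N/7+1 with hK
    have hm1 : 7*m ≤ 3*N := by omega
    have hm2 : 3*N ≤ 7*m + 6 := by omega
    have hc1 : 4*c ≤ N := by omega
    have hc2 : N ≤ 4*c + 3 := by omega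
    have hK2 : 7*K ≤ 5*N + 7 := by omega
    have hK1 : 5*N + 1 ≤ 7*K := by omega
    refine ⟨by omega, ?_, ?_, ?_⟩
    · have A : (7*m)*(7*m) ≤ (3*N)*(3*N) := Nat.mul_le_mul hm1 hm1
      have B : (4*c)*(4*c) ≤ N*N := Nat.mul_le_mul hc1 hc1
      nlinarith [A, B]
    · have C : (5*N+1)*(5*N+1) ≤ (7*K)*(7*K) := Nat.mul_le_mul hK1 hK1
      nlinarith [C]
    · obtain ⟨w, hw⟩ : ∃ w, 4*m - 2*c + 1 = w := ⟨_, rfl⟩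
      have hw' : w + 2*c = 4*m + 1 := by omega
      rw [hw]
      have E : N - 1 ≤ 2*(2*c+1) := by omega
      have F : 34*N - 68 ≤ 28*w := by omega
      have G : (N-1)*(34*N-68) ≤ (2*(2*c+1))*(28*w) := Nat.mul_le_mul E F
      have D : (7*K)*(7*K) ≤ (5*N+7)*(5*N+7) := Nat.mul_le_mul hK2 hK2
      zify at G D ⊢
      have hN1 : (1:ℤ) ≤ N := by exact_mod_cast Nat.one_le_iff_ne_zero.2 (by omega)
      have hN68 : (68:ℤ) ≤ 34*(N:ℤ) := by
        have : (2:ℕ) ≤ N := by omega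
        exact_mod_cast Nat.mul_le_mul_left 34 this
      rw [Nat.cast_sub (by omega), Nat.cast_sub (by omega)] at G
      push_cast at G D ⊢
      nlinarith [G, D, hN1]

lemma part1 (z : ℂ) (N : ℕ) (hN : 0 < N) :
    ∃ p q : GaussianInt, 0 < ‖(q : ℂ)‖ ∧ ‖(q : ℂ)‖ ≤ N ∧
      ‖(z - (p : ℂ) / (q : ℂ))‖ < 2 / (‖(q : ℂ)‖ * N) := by
  by_cases h1 : N = 1
  · subst h1
    exact core z 1 1 1 (by norm_num) (by norm_num) (by norm_num)
      {(0,0),(0,1)} (by decide) (by decide) (by decide)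
  by_cases h2 : N = 2
  · subst h2
    exact core z 2 2 2 (by norm_num) (by norm_num) (by norm_num)
      {(0,0),(1,0),(-1,0),(0,1),(0,-1)} (by decide) (by decide) (by decide)
  by_cases h3 : N = 3
  · subst h3
    exact core z 3 2 3 (by norm_num) (by norm_num) (by norm_num)
      {(0,0),(0,1),(0,2),(1,0),(1,1),(1,2),(2,0),(2,1),(2,2)} (by decide) (by decide) (by decide)
  by_cases h4 : N = 4
  · subst h4
    exact core z 4 3 3 (by norm_num) (by norm_num) (by norm_num)
      {(0,0),(1,0),(-1,0),(0,1),(0,-1),(1,1),(1,-1),(-1,1),(-1,-1),(2,0),(-2,0),(0,2),(0,-2)}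
      (by decide) (by decide) (by decide)
  by_cases h6 : N = 6
  · subst h6
    exact core z 6 4 6 (by norm_num) (by norm_num) (by norm_num)
      {(0,0),(0,1),(0,2),(0,3),(0,4),(1,0),(1,1),(1,2),(1,3),(1,4),
       (2,0),(2,1),(2,2),(2,3),(2,4),(3,0),(3,1),(3,2),(3,3),(3,4),
       (4,0),(4,1),(4,2),(4,3),(4,4)} (by decide) (by decide) (by decide)
  by_cases h7 : N = 7
  · subst h7
    exact cross z 7 3 1 5 (by norm_num) (by norm_num) (by norm_num) (by norm_num)
      (by norm_num) (by norm_num)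
  by_cases h9 : N = 9
  · subst h9
    exact cross z 9 4 2 7 (by norm_num) (by norm_num) (by norm_num) (by norm_num)
      (by norm_num) (by norm_num)
  have h5 : 5 ≤ N := by omega
  obtain ⟨P1, P2, P3, P4⟩ := params N h5 h6 h7 h9
  exact cross z N (3*N/7) (N/4) (5*N/7+1) hN (by omega) P1 P2 P3 P4

lemma one_le_abs (q : GaussianInt) (hq : q ≠ 0) : 1 ≤ ‖(q:ℂ)‖ := by
  have h1 : (1:ℝ) ≤ Complex.normSq (q:ℂ) := by
    rw [← GaussianInt.intCast_real_norm]
    have h2 : 1 ≤ q.norm := by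
      have h3 := GaussianInt.norm_nonneg q
      rcases lt_or_ge q.norm 1 with h | h
      · exfalso
        apply hq
        rw [← GaussianInt.norm_eq_zero]
        omega
      · exact h
    exact_mod_cast h2
  nlinarith [norm_nonneg (q:ℂ), Complex.sq_norm (q:ℂ)]

end Stmt14Aux

/-- Complex Dirichlet theorem: for any `z ∈ ℂ` and positive integer `N` there are Gaussian
integers `p`, `q` with `0 < |q| ≤ N` and `|z - p/q| < 2/(|q| N)`; moreover
`|z - p/q| < 2/|q|²` holds for infinitely many pairs of Gaussian integers `p`, `q` with
`q ≠ 0`. -/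
theorem stmt14 (z : ℂ) (N : ℕ) (hN : 0 < N) :
    (∃ p q : GaussianInt, 0 < ‖(q : ℂ)‖ ∧ ‖(q : ℂ)‖ ≤ N ∧
      ‖(z - (p : ℂ) / (q : ℂ))‖ < 2 / (‖(q : ℂ)‖ * N)) ∧
    {pq : GaussianInt × GaussianInt | pq.2 ≠ 0 ∧
      ‖(z - (pq.1 : ℂ) / (pq.2 : ℂ))‖ < 2 / ‖(pq.2 : ℂ)‖ ^ 2}.Infinite := by
  refine ⟨Stmt14Aux.part1 z N hN, ?_⟩
  set S : Set (GaussianInt × GaussianInt) := {pq : GaussianInt × GaussianInt | pq.2 ≠ 0 ∧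
      ‖(z - (pq.1 : ℂ) / (pq.2 : ℂ))‖ < 2 / ‖(pq.2 : ℂ)‖ ^ 2} with hS
  by_cases hrat : ∃ p q : GaussianInt, q ≠ 0 ∧ z = (p:ℂ)/(q:ℂ)
  · obtain ⟨p₀, q₀, hq₀, hz⟩ := hrat
    have hq₀c : (q₀:ℂ) ≠ 0 := by rw [Ne, GaussianInt.toComplex_eq_zero]; exact hq₀
    apply Set.infinite_of_injective_forall_mem
      (f := fun n : ℕ => ((((n:GaussianInt) + 1) * p₀, ((n:GaussianInt) + 1) * q₀) :
        GaussianInt × GaussianInt))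
    · intro a b hab
      have h2 := congrArg (fun x => GaussianInt.toComplex x.2) hab
      simp only [map_mul, map_add, map_natCast, map_one] at h2
      have h3 := mul_right_cancel₀ hq₀c h2
      have h4 : ((a:ℕ):ℂ) = ((b:ℕ):ℂ) := by linear_combination h3
      exact_mod_cast h4
    · intro n
      have hn1 : ((n:GaussianInt) + 1) ≠ 0 := by
        rw [Ne, ← GaussianInt.toComplex_eq_zero]
        push_cast
        intro h
        have := congrArg Complex.re h
        push_cast at this
        norm_num at this
        linarith [Nat.cast_nonneg (α := ℝ) n]
      have hq1 : ((n:GaussianInt) + 1) * q₀ ≠ 0 := mul_ne_zero hn1 hq₀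
      refine ⟨hq1, ?_⟩
      have hcalc : ((((n:GaussianInt) + 1) * p₀ : GaussianInt) : ℂ) /
          ((((n:GaussianInt) + 1) * q₀ : GaussianInt) : ℂ) = (p₀:ℂ)/(q₀:ℂ) := by
        rw [map_mul, map_mul]
        apply mul_div_mul_left
        simp only [map_add, map_natCast, map_one]
        exact_mod_cast Nat.succ_ne_zero n
      rw [hcalc, ← hz, sub_self, norm_zero]
      have : (0:ℝ) < ‖((((n:GaussianInt) + 1) * q₀ : GaussianInt) : ℂ)‖ := by
        apply norm_pos_iff.mpr
        rw [Ne, GaussianInt.toComplex_eq_zero]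
        exact hq1
      positivity
  · push_neg at hrat
    by_contra hfin
    rw [Set.not_infinite] at hfin
    have hSmem : ∀ M : ℕ, 0 < M → ∃ pq : GaussianInt × GaussianInt, pq ∈ S ∧
        ‖(z - (pq.1:ℂ)/(pq.2:ℂ))‖ < 2/(M:ℝ) := by
      intro M hM
      obtain ⟨p, q, hq0, hqM, herr⟩ := Stmt14Aux.part1 z M hM
      have hqc : (q:ℂ) ≠ 0 := by
        intro h; rw [h, norm_zero] at hq0; exact lt_irrefl _ hq0
      have hqz : q ≠ 0 := by rwa [Ne, ← GaussianInt.toComplex_eq_zero]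
      have hone : 1 ≤ ‖(q:ℂ)‖ := Stmt14Aux.one_le_abs q hqz
      have hMR : (0:ℝ) < M := by exact_mod_cast hM
      refine ⟨(p, q), ⟨hqz, ?_⟩, ?_⟩
      · refine lt_of_lt_of_le herr ?_
        rw [pow_two]
        apply div_le_div_of_nonneg_left (by norm_num) (by positivity)
        exact mul_le_mul_of_nonneg_left hqM (by positivity)
      · refine lt_of_lt_of_le herr ?_
        apply div_le_div_of_nonneg_left (by norm_num) (by positivity)
        nlinarith [hone, hMR]
    obtain ⟨pq₀, hpq₀S, hmin⟩ := Set.exists_min_image S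
      (fun pq => ‖(z - (pq.1:ℂ)/(pq.2:ℂ))‖) hfin
      (by obtain ⟨pq, hpq, _⟩ := hSmem 1 (by norm_num); exact ⟨pq, hpq⟩)
    set ε := ‖(z - (pq₀.1:ℂ)/(pq₀.2:ℂ))‖ with hε
    have hε0 : 0 < ε := by
      rw [hε]
      apply norm_pos_iff.mpr
      rw [sub_ne_zero]
      exact hrat pq₀.1 pq₀.2 hpq₀S.1
    obtain ⟨M, hM⟩ := exists_nat_gt (2/ε)
    have hM0 : 0 < M := by
      have : (0:ℝ) < 2/ε := by positivity
      have : (0:ℝ) < M := lt_trans this hM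
      exact_mod_cast this
    obtain ⟨pq₁, h1S, h1lt⟩ := hSmem M hM0
    have hge := hmin pq₁ h1S
    have hMR : (0:ℝ) < M := by exact_mod_cast hM0
    have h2M : 2/(M:ℝ) < ε := by
      rw [div_lt_iff₀ hMR]
      rw [div_lt_iff₀ hε0] at hM
      linarith [hM, mul_comm ε (M:ℝ)]
    linarith [hge, h1lt, h2M]
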